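/- Let A ∈ ℝ⟦X⟧ with coefficients a_j = coeff j A. Then for every n ≥ 1, the n-th coefficient of A ∘ (X·(1−X)⁻¹) equals Σ_{j=1}^{n} C(n−1, j−1)·a_j, where C denotes the binomial coefficient. -/

import Mathlib

open PowerSeries

/-- Substitution (composition) of formal power series: `psComp g f = g ∘ f`,
the substitution of `f` into `g`.  When `f` has zero constant coefficient, the
`n`-th coefficient of `g ∘ f` is `∑_{k=0}^{n} g_k · [zⁿ] fᵏ`. -/
noncomputable def psComp (g f : PowerSeries ℝ) : PowerSeries ℝ :=
  PowerSeries.mk fun n => ∑ k ∈ Finset.range (n + 1),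
    PowerSeries.coeff k g * PowerSeries.coeff n (f ^ k)

lemma inv_one_sub_eq : (1 - X : ℝ⟦X⟧)⁻¹ = PowerSeries.mk 1 := by
  rw [PowerSeries.inv_eq_iff_mul_eq_one (by simp)]
  exact PowerSeries.mk_one_mul_one_sub_eq_one ℝ

lemma pow_inv_one_sub (k : ℕ) :
    ((1 - X : ℝ⟦X⟧)⁻¹) ^ k = (PowerSeries.invOneSubPow ℝ k).val := by
  rw [inv_one_sub_eq, PowerSeries.invOneSubPow_eq_inv_one_sub_pow]
  rw [Units.val_pow_eq_pow_val]
  rfl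

lemma coeff_pow_key (n k : ℕ) (hk : 1 ≤ k) (hkn : k ≤ n) :
    coeff n ((X * (1 - X)⁻¹ : ℝ⟦X⟧) ^ k) = ((n - 1).choose (k - 1) : ℝ) := by
  rw [mul_pow, pow_inv_one_sub,
    PowerSeries.invOneSubPow_val_eq_mk_sub_one_add_choose_of_pos ℝ k hk,
    PowerSeries.coeff_X_pow_mul' _ k n, if_pos hkn, PowerSeries.coeff_mk]
  congr 2
  omega

theorem stmt6 (A : PowerSeries ℝ) (n : ℕ) (hn : 1 ≤ n) :
    coeff n (psComp A (X * (1 - X)⁻¹))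
      = ∑ j ∈ Finset.Icc 1 n, ((n - 1).choose (j - 1) : ℝ) * coeff j A := by
  rw [psComp, PowerSeries.coeff_mk]
  rw [show Finset.range (n + 1) = insert 0 (Finset.Icc 1 n) by
    ext x; simp [Finset.mem_insert, Finset.mem_range, Finset.mem_Icc]; omega]
  rw [Finset.sum_insert (by simp)]
  have h0 : coeff n ((X * (1 - X)⁻¹ : ℝ⟦X⟧) ^ 0) = 0 := by
    rw [pow_zero, PowerSeries.coeff_one, if_neg (by omega)]
  rw [h0, mul_zero, zero_add]
  refine Finset.sum_congr rfl fun j hj => ?_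
  rw [Finset.mem_Icc] at hj
  rw [coeff_pow_key n j hj.1 hj.2, mul_comm]
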